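/- The function (ξ,λ) ↦ (1+ξ)^{−(n+2)} is integrable on the Heisenberg fan Σ with respect to the Plancherel measure μ; consequently there is a constant C such that ‖ψ‖_{L¹(Σ,μ)} ≤ C · sup_{(ξ,λ)∈ℝ²} (1+|ξ|)^{n+2} |ψ(ξ,λ)| for every Schwartz function ψ on ℝ². -/
import Mathlib


open MeasureTheory

noncomputable section

variable (n : ℕ)

/-- The `L¹` norm on the Heisenberg fan `Σ` with respect to the Plancherel
measure `μ`, computed for a function on `ℝ²` via
`∫_Σ |ψ| dμ = (2π)^{−(n+1)} ∫_ℝ Σⱼ C(j+n−1,j) |ψ(|λ|(2j+n), λ)| |λ|ⁿ dλ`. -/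
def fanL1Norm (ψ : ℝ × ℝ → ℂ) : ℝ :=
  (2 * Real.pi) ^ (-((n : ℤ) + 1)) *
    ∫ lam : ℝ, ∑' j : ℕ, ((j + n - 1).choose j : ℝ) *
      ‖ψ (|lam| * (2 * j + n), lam)‖ * |lam| ^ n

/-- Auxiliary: integrability of a nonnegative `tsum` from termwise integral bounds. -/
private lemma my_integrable_tsum {f : ℕ → ℝ → ℝ} (hmeas : ∀ i, Measurable (f i))
    (hnn : ∀ i x, 0 ≤ f i x) (hsum : ∀ x, Summable fun i => f i x)
    (hint : ∀ i, Integrable (f i) volume) {B : ℕ → ℝ} (hB : ∀ i, ∫ x, f i x ≤ B i)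
    (hSB : Summable B) : Integrable (fun x => ∑' i, f i x) volume := by
  have hFmeas : Measurable fun x => ∑' i, f i x :=
    measurable_of_tendsto_metrizable' Filter.atTop
      (fun N => Finset.measurable_sum (Finset.range N) fun i _ => hmeas i)
      (tendsto_pi_nhds.mpr fun x => (hsum x).hasSum.tendsto_sum_nat)
  refine ⟨hFmeas.aestronglyMeasurable, ?_⟩
  rw [hasFiniteIntegral_iff_ofReal (ae_of_all _ fun x => tsum_nonneg fun i => hnn i x)]
  have hB0 : ∀ i, 0 ≤ B i := fun i =>
    le_trans (integral_nonneg fun x => hnn i x) (hB i)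
  calc ∫⁻ x, ENNReal.ofReal (∑' i, f i x)
      = ∫⁻ x, ∑' i, ENNReal.ofReal (f i x) := by
        refine lintegral_congr fun x => ?_
        exact ENNReal.ofReal_tsum_of_nonneg (fun i => hnn i x) (hsum x)
    _ = ∑' i, ∫⁻ x, ENNReal.ofReal (f i x) :=
        lintegral_tsum fun i => ((hmeas i).ennreal_ofReal).aemeasurable
    _ = ∑' i, ENNReal.ofReal (∫ x, f i x) := by
        refine tsum_congr fun i => ?_
        exact (ofReal_integral_eq_lintegral_ofReal (hint i) (ae_of_all _ fun x => hnn i x)).symm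
    _ ≤ ∑' i, ENNReal.ofReal (B i) :=
        ENNReal.tsum_le_tsum fun i => ENNReal.ofReal_le_ofReal (hB i)
    _ = ENNReal.ofReal (∑' i, B i) := (ENNReal.ofReal_tsum_of_nonneg hB0 hSB).symm
    _ < ⊤ := ENNReal.ofReal_lt_top

set_option maxHeartbeats 1000000 in
/-- `(ξ,λ) ↦ (1+ξ)^{−(n+2)}` is integrable on the Heisenberg fan with respect
to the Plancherel measure, and consequently the `L¹(Σ,μ)` norm of any Schwartz
function `ψ` on `ℝ²` is bounded by a constant times
`sup_{(ξ,λ)} (1+|ξ|)^{n+2} |ψ(ξ,λ)|`. -/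
theorem fan_plancherel_integrability (hn : 1 ≤ n) :
    Integrable (fun lam : ℝ => ∑' j : ℕ, ((j + n - 1).choose j : ℝ) *
        (1 + |lam| * (2 * j + n)) ^ (-((n : ℤ) + 2)) * |lam| ^ n) volume ∧
    ∃ C : ℝ, 0 < C ∧ ∀ ψ : SchwartzMap (ℝ × ℝ) ℂ,
      fanL1Norm n (fun p => ψ p) ≤
        C * ⨆ p : ℝ × ℝ, (1 + |p.1|) ^ (n + 2) * ‖ψ p‖ := by
  set g : ℕ → ℝ → ℝ := fun j lam => ((j + n - 1).choose j : ℝ) *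
      (1 + |lam| * (2 * j + n)) ^ (-((n : ℤ) + 2)) * |lam| ^ n with hg
  set a : ℕ → ℝ := fun j => 2 * (j : ℝ) + n with ha
  have ha1 : ∀ j, (1 : ℝ) ≤ a j := by
    intro j
    have h1 : (1 : ℝ) ≤ (n : ℝ) := by exact_mod_cast hn
    have h2 : (0 : ℝ) ≤ (j : ℝ) := Nat.cast_nonneg j
    simp only [ha]; linarith
  have ha0 : ∀ j, (0 : ℝ) < a j := fun j => lt_of_lt_of_le one_pos (ha1 j)
  have hbase : ∀ (j : ℕ) (lam : ℝ), (0 : ℝ) < 1 + |lam| * a j := by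
    intro j lam
    have := mul_nonneg (abs_nonneg lam) (ha0 j).le
    linarith
  have hzpow : ∀ (j : ℕ) (lam : ℝ),
      (1 + |lam| * (2 * (j : ℝ) + n)) ^ (-((n : ℤ) + 2)) = ((1 + |lam| * a j) ^ (n + 2))⁻¹ := by
    intro j lam
    have h : -((n : ℤ) + 2) = -(((n + 2 : ℕ) : ℤ)) := by push_cast; ring
    rw [show (2 * (j : ℝ) + n) = a j from rfl, h, zpow_neg, zpow_natCast]
  have hchoose : ∀ j : ℕ, ((j + n - 1).choose j : ℝ) ≤ (a j) ^ (n - 1) := by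
    intro j
    have h1 : (j + n - 1).choose j = (j + n - 1).choose (n - 1) := by
      have hk : n - 1 ≤ j + n - 1 := by omega
      have h := Nat.choose_symm hk
      rw [show j + n - 1 - (n - 1) = j by omega] at h
      exact h
    have h2 : (j + n - 1).choose (n - 1) ≤ (j + n - 1) ^ (n - 1) := Nat.choose_le_pow _ _
    have h3 : (j + n - 1) ^ (n - 1) ≤ (2 * j + n) ^ (n - 1) := Nat.pow_le_pow_left (by omega) _
    have h4 : ((j + n - 1).choose j : ℝ) ≤ ((2 * j + n : ℕ) : ℝ) ^ (n - 1) := by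
      exact_mod_cast h1 ▸ (h2.trans h3)
    have h5 : ((2 * j + n : ℕ) : ℝ) = a j := by push_cast [ha]; ring
    rwa [h5] at h4
  have hgnn : ∀ j lam, 0 ≤ g j lam := by
    intro j lam
    simp only [hg]
    have h1 : (0 : ℝ) < (1 + |lam| * (2 * (j : ℝ) + n)) ^ (-((n : ℤ) + 2)) :=
      zpow_pos (hbase j lam) _
    positivity
  set b : ℕ → ℝ → ℝ := fun j lam => (a j)⁻¹ * ((1 + |lam| * a j) ^ 2)⁻¹ with hb
  have hgb : ∀ j lam, g j lam ≤ b j lam := by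
    intro j lam
    simp only [hg, hb]
    rw [hzpow j lam]
    set t : ℝ := |lam| * a j with hT
    have ht0 : 0 ≤ t := mul_nonneg (abs_nonneg lam) (ha0 j).le
    have hbt : (0 : ℝ) < 1 + t := by linarith
    rw [show ((j + n - 1).choose j : ℝ) * ((1 + t) ^ (n + 2))⁻¹ * |lam| ^ n
        = ((j + n - 1).choose j : ℝ) * |lam| ^ n / (1 + t) ^ (n + 2) by ring,
      show ((a j)⁻¹ * ((1 + t) ^ 2)⁻¹ : ℝ) = 1 / (a j * (1 + t) ^ 2) by
        rw [one_div, mul_inv]]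
    rw [div_le_div_iff₀ (by positivity) (by positivity)]
    have key : ((j + n - 1).choose j : ℝ) * |lam| ^ n * a j ≤ (1 + t) ^ n := by
      calc ((j + n - 1).choose j : ℝ) * |lam| ^ n * a j
          ≤ (a j) ^ (n - 1) * |lam| ^ n * a j := by
            have hc := hchoose j
            have hl : (0 : ℝ) ≤ |lam| ^ n := by positivity
            nlinarith [mul_nonneg hl (ha0 j).le]
        _ = (a j) ^ n * |lam| ^ n := by
            rw [show (a j) ^ (n - 1) * |lam| ^ n * a j
                = ((a j) ^ (n - 1) * a j) * |lam| ^ n by ring,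
              ← pow_succ, show n - 1 + 1 = n by omega]
        _ = t ^ n := by rw [hT, mul_pow]; ring
        _ ≤ (1 + t) ^ n := pow_le_pow_left₀ ht0 (by linarith) n
    calc ((j + n - 1).choose j : ℝ) * |lam| ^ n * (a j * (1 + t) ^ 2)
        = (((j + n - 1).choose j : ℝ) * |lam| ^ n * a j) * (1 + t) ^ 2 := by ring
      _ ≤ (1 + t) ^ n * (1 + t) ^ 2 := mul_le_mul_of_nonneg_right key (by positivity)
      _ = 1 * (1 + t) ^ (n + 2) := by ring
  set F : ℝ → ℝ := fun x => ((1 + |x|) ^ 2)⁻¹ with hF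
  have hFint : Integrable F volume := by
    have h := integrable_one_add_norm (E := ℝ) (μ := volume) (r := 2)
      (by norm_num [Module.finrank_self])
    refine h.congr (ae_of_all _ fun x => ?_)
    show (1 + ‖x‖) ^ (-(2:ℝ)) = F x
    rw [Real.rpow_neg (by positivity), Real.norm_eq_abs,
      show ((2 : ℝ) = ((2 : ℕ) : ℝ)) by norm_num, Real.rpow_natCast]
  set K : ℝ := ∫ x, F x with hK
  have hK0 : 0 ≤ K := integral_nonneg fun x => by positivity
  have hbF : ∀ j, b j = fun lam => (a j)⁻¹ * F (a j * lam) := by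
    intro j
    funext lam
    simp only [hb, hF, abs_mul, abs_of_pos (ha0 j)]
    ring_nf
  have hbint : ∀ j, Integrable (b j) volume := by
    intro j
    rw [hbF j]
    exact (hFint.comp_mul_left' (ha0 j).ne').const_mul _
  have hbval : ∀ j, ∫ lam, b j lam = (a j)⁻¹ * ((a j)⁻¹ * K) := by
    intro j
    rw [hbF j, integral_const_mul, Measure.integral_comp_mul_left F (a j),
      abs_of_pos (inv_pos.mpr (ha0 j)), smul_eq_mul, hK]
  have hgcont : ∀ j, Continuous (g j) := by
    intro j
    have hgeq : g j = fun lam => ((j + n - 1).choose j : ℝ) *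
        ((1 + |lam| * a j) ^ (n + 2))⁻¹ * |lam| ^ n := by
      funext lam; simp only [hg]; rw [hzpow j lam]
    rw [hgeq]
    have hc : Continuous fun lam : ℝ => ((1 + |lam| * a j) ^ (n + 2) : ℝ) := by
      continuity
    exact (continuous_const.mul (hc.inv₀ fun lam =>
      (pow_pos (hbase j lam) _).ne')).mul (continuous_abs.pow n)
  have hgint : ∀ j, Integrable (g j) volume := by
    intro j
    refine (hbint j).mono' (hgcont j).aestronglyMeasurable (ae_of_all _ fun lam => ?_)
    rw [Real.norm_of_nonneg (hgnn j lam)]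
    exact hgb j lam
  have haj : ∀ j : ℕ, (a j)⁻¹ ≤ ((j : ℝ) + 1)⁻¹ := by
    intro j
    have h1 : ((j : ℝ) + 1) ≤ a j := by
      have h2 : (1 : ℝ) ≤ (n : ℝ) := by exact_mod_cast hn
      have h3 : (0 : ℝ) ≤ (j : ℝ) := Nat.cast_nonneg j
      simp only [ha]; linarith
    exact inv_anti₀ (by positivity) h1
  have hssum : Summable fun j : ℕ => (((j : ℝ) + 1)⁻¹ * ((j : ℝ) + 1)⁻¹) := by
    have h2 : Summable fun k : ℕ => 1 / ((k : ℝ)) ^ 2 :=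
      Real.summable_one_div_nat_pow.mpr one_lt_two
    have h3 : Summable fun j : ℕ => 1 / (((j + 1 : ℕ) : ℝ)) ^ 2 :=
      (summable_nat_add_iff (f := fun k : ℕ => 1 / ((k : ℝ)) ^ 2) 1).mpr h2
    refine h3.congr fun j => ?_
    push_cast
    rw [one_div, sq, mul_inv]
  have hBsum : Summable fun j : ℕ => K * (((j : ℝ) + 1)⁻¹ * ((j : ℝ) + 1)⁻¹) :=
    hssum.mul_left K
  have hIb : ∀ j, ∫ lam, g j lam ≤ K * (((j : ℝ) + 1)⁻¹ * ((j : ℝ) + 1)⁻¹) := by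
    intro j
    have h1 : ∫ lam, g j lam ≤ ∫ lam, b j lam :=
      integral_mono (hgint j) (hbint j) fun lam => hgb j lam
    rw [hbval j] at h1
    refine h1.trans ?_
    have h2 := haj j
    have h3 : (0 : ℝ) ≤ (a j)⁻¹ := (inv_pos.mpr (ha0 j)).le
    have h4 : (0 : ℝ) ≤ ((j : ℝ) + 1)⁻¹ := by positivity
    calc (a j)⁻¹ * ((a j)⁻¹ * K)
        ≤ ((j : ℝ) + 1)⁻¹ * (((j : ℝ) + 1)⁻¹ * K) :=
          mul_le_mul h2 (mul_le_mul h2 le_rfl hK0 h4) (by positivity) h4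
      _ = K * (((j : ℝ) + 1)⁻¹ * ((j : ℝ) + 1)⁻¹) := by ring
  have hgsum : ∀ lam, Summable fun j => g j lam := by
    intro lam
    rcases eq_or_ne lam 0 with rfl | hlam
    · have h0 : (fun j => g j 0) = fun _ => (0 : ℝ) := by
        funext j
        simp only [hg, abs_zero]
        rw [zero_pow (by omega : n ≠ 0)]
        ring
      rw [h0]; exact summable_zero
    · have hl : (0 : ℝ) < |lam| := abs_pos.mpr hlam
      refine Summable.of_nonneg_of_le (fun j => hgnn j lam) (fun j => ?_)
        (hssum.mul_left (|lam|⁻¹ * |lam|⁻¹))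
      set t : ℝ := |lam| * a j with hT
      have ht0 : (0 : ℝ) < t := mul_pos hl (ha0 j)
      have hsq : ((1 + t) ^ 2)⁻¹ ≤ (t ^ 2)⁻¹ := by
        refine inv_anti₀ (by positivity) ?_
        nlinarith
      have htsq : (t ^ 2)⁻¹ = (|lam|⁻¹ * |lam|⁻¹) * ((a j)⁻¹ * (a j)⁻¹) := by
        rw [hT, mul_pow, mul_inv, sq, sq, mul_inv, mul_inv]
      calc g j lam ≤ b j lam := hgb j lam
        _ = (a j)⁻¹ * ((1 + t) ^ 2)⁻¹ := rfl
        _ ≤ 1 * (t ^ 2)⁻¹ := by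
            refine mul_le_mul ?_ hsq (by positivity) one_pos.le
            rw [inv_le_one_iff₀]; right; exact ha1 j
        _ = (|lam|⁻¹ * |lam|⁻¹) * ((a j)⁻¹ * (a j)⁻¹) := by rw [one_mul, htsq]
        _ ≤ (|lam|⁻¹ * |lam|⁻¹) * (((j : ℝ) + 1)⁻¹ * ((j : ℝ) + 1)⁻¹) := by
            have h3 : (0 : ℝ) ≤ (a j)⁻¹ := (inv_pos.mpr (ha0 j)).le
            have h4 : (0 : ℝ) ≤ ((j : ℝ) + 1)⁻¹ := by positivity
            refine mul_le_mul_of_nonneg_left ?_ (by positivity)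
            exact mul_le_mul (haj j) (haj j) h3 h4
  have hfint : Integrable (fun lam => ∑' j, g j lam) volume :=
    my_integrable_tsum (fun j => (hgcont j).measurable) hgnn hgsum hgint hIb hBsum
  refine ⟨hfint, ?_⟩
  set I : ℝ := ∫ lam, ∑' j, g j lam with hI
  have hI0 : 0 ≤ I := integral_nonneg fun lam => tsum_nonneg fun j => hgnn j lam
  set c0 : ℝ := (2 * Real.pi) ^ (-((n : ℤ) + 1)) with hc0
  have hc0pos : 0 < c0 := zpow_pos (by positivity) _
  refine ⟨c0 * I + 1, by nlinarith, fun ψ => ?_⟩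
  set M : ℝ := ⨆ p : ℝ × ℝ, (1 + |p.1|) ^ (n + 2) * ‖ψ p‖ with hM
  have hbdd : BddAbove (Set.range fun p : ℝ × ℝ => (1 + |p.1|) ^ (n + 2) * ‖ψ p‖) := by
    refine ⟨2 ^ (n + 2) *
      (Finset.Iic ((n + 2, 0) : ℕ × ℕ)).sup (fun m => SchwartzMap.seminorm ℝ m.1 m.2) ψ, ?_⟩
    rintro x ⟨p, rfl⟩
    calc (1 + |p.1|) ^ (n + 2) * ‖ψ p‖
        ≤ (1 + ‖p‖) ^ (n + 2) * ‖ψ p‖ := by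
          refine mul_le_mul_of_nonneg_right (pow_le_pow_left₀ (by positivity) ?_ _)
            (norm_nonneg _)
          have : |p.1| ≤ ‖p‖ := by
            rw [← Real.norm_eq_abs]
            exact norm_fst_le p
          linarith
      _ = (1 + ‖p‖) ^ (n + 2) * ‖iteratedFDeriv ℝ 0 (⇑ψ) p‖ := by
          rw [norm_iteratedFDeriv_zero]
      _ ≤ 2 ^ (n + 2) *
          (Finset.Iic ((n + 2, 0) : ℕ × ℕ)).sup (fun m => SchwartzMap.seminorm ℝ m.1 m.2) ψ :=
          SchwartzMap.one_add_le_sup_seminorm_apply (m := ((n + 2, 0) : ℕ × ℕ))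
            le_rfl le_rfl ψ p
  have hMle : ∀ p : ℝ × ℝ, (1 + |p.1|) ^ (n + 2) * ‖ψ p‖ ≤ M := fun p => le_ciSup hbdd p
  have hM0 : 0 ≤ M := le_trans (by positivity) (hMle (0, 0))
  have hψb : ∀ (j : ℕ) (lam : ℝ), ((j + n - 1).choose j : ℝ) *
      ‖ψ (|lam| * (2 * (j : ℝ) + n), lam)‖ * |lam| ^ n ≤ M * g j lam := by
    intro j lam
    have ht0 : 0 ≤ |lam| * a j := mul_nonneg (abs_nonneg lam) (ha0 j).le
    have hp := hMle (|lam| * (2 * (j : ℝ) + n), lam)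
    simp only at hp
    rw [show ((2 : ℝ) * (j : ℝ) + n) = a j from rfl, abs_of_nonneg ht0] at hp
    have hpow : (0 : ℝ) < (1 + |lam| * a j) ^ (n + 2) := pow_pos (hbase j lam) _
    have hw : ‖ψ (|lam| * a j, lam)‖ ≤ M * ((1 + |lam| * a j) ^ (n + 2))⁻¹ := by
      rw [← div_eq_mul_inv]
      exact (le_div_iff₀' hpow).mpr hp
    calc ((j + n - 1).choose j : ℝ) * ‖ψ (|lam| * a j, lam)‖ * |lam| ^ n
        ≤ ((j + n - 1).choose j : ℝ) *
            (M * ((1 + |lam| * a j) ^ (n + 2))⁻¹) * |lam| ^ n := by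
          refine mul_le_mul_of_nonneg_right (mul_le_mul_of_nonneg_left hw ?_) (by positivity)
          positivity
      _ = M * (((j + n - 1).choose j : ℝ) *
            ((1 + |lam| * a j) ^ (n + 2))⁻¹ * |lam| ^ n) := by ring
      _ = M * g j lam := by simp only [hg]; rw [hzpow j lam]
  have hHle : ∀ lam : ℝ, (∑' j : ℕ, ((j + n - 1).choose j : ℝ) *
      ‖ψ (|lam| * (2 * (j : ℝ) + n), lam)‖ * |lam| ^ n) ≤ M * ∑' j, g j lam := by
    intro lam
    rw [← tsum_mul_left]
    refine Summable.tsum_le_tsum (fun j => hψb j lam) ?_ ((hgsum lam).mul_left M)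
    exact Summable.of_nonneg_of_le (fun j => by positivity) (fun j => hψb j lam)
      ((hgsum lam).mul_left M)
  have hint2 : (∫ lam : ℝ, ∑' j : ℕ, ((j + n - 1).choose j : ℝ) *
      ‖ψ (|lam| * (2 * (j : ℝ) + n), lam)‖ * |lam| ^ n) ≤ M * I := by
    have h := integral_mono_of_nonneg
      (ae_of_all _ fun lam => tsum_nonneg fun j : ℕ => by positivity)
      (hfint.const_mul M) (ae_of_all _ hHle)
    rwa [integral_const_mul] at h
  rw [fanL1Norm]
  calc c0 * (∫ lam : ℝ, ∑' j : ℕ, ((j + n - 1).choose j : ℝ) *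
        ‖ψ (|lam| * (2 * (j : ℝ) + n), lam)‖ * |lam| ^ n)
      ≤ c0 * (M * I) := mul_le_mul_of_nonneg_left hint2 hc0pos.le
    _ = (c0 * I) * M := by ring
    _ ≤ (c0 * I + 1) * M := mul_le_mul_of_nonneg_right (by linarith) hM0
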